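/- In the Gaussian location model, suppose θ̂_n satisfies P_{n,0}(θ̂_n = 0) → 1 and l : ℝ → [0,∞) is nonnegative with l(s) ≥ l(0) for all s. Then for any fixed θ* with θ* = 0 as one of its (here the only) coordinates, and any sequence ρ_n with √n ρ_n → ∞, the supremum of E_{n,θ}[l(√n(θ̂_n − θ))] over {|θ − θ*| < ρ_n} tends to sup_{s∈ℝ} l(s). -/

import Mathlib

open MeasureTheory ProbabilityTheory Filter Topology

/-- Joint law of a sample of size `n` of i.i.d. `N(θ,1)` observations. -/
noncomputable def gaussP (n : ℕ) (θ : ℝ) : Measure (Fin n → ℝ) :=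
  Measure.pi fun _ => gaussianReal θ 1

noncomputable def gDens (θ : ℝ) (x : ℝ) : ENNReal :=
  ENNReal.ofReal (Real.exp (θ * x - θ ^ 2 / 2))

lemma gDens_meas (θ : ℝ) : Measurable (gDens θ) :=
  (((measurable_const.mul measurable_id).sub measurable_const).exp).ennreal_ofReal

instance gaussP_prob (n : ℕ) (θ : ℝ) : IsProbabilityMeasure (gaussP n θ) := by
  unfold gaussP; infer_instance

lemma pdf_factor (θ x : ℝ) :
    gaussianPDFReal θ 1 x = Real.exp (θ * x - θ ^ 2 / 2) * gaussianPDFReal 0 1 x := by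
  unfold gaussianPDFReal
  simp only [NNReal.coe_one, mul_one]
  rw [mul_left_comm (Real.exp (θ * x - θ ^ 2 / 2)), ← Real.exp_add]
  congr 1
  ring

lemma gauss_withDensity (θ : ℝ) :
    gaussianReal θ 1 = (gaussianReal 0 1).withDensity (gDens θ) := by
  rw [gaussianReal_of_var_ne_zero _ one_ne_zero, gaussianReal_of_var_ne_zero _ one_ne_zero,
    ← withDensity_mul _ (measurable_gaussianPDF 0 1) (gDens_meas θ)]
  congr 1
  ext x
  simp only [Pi.mul_apply, gaussianPDF_def, gDens]
  rw [pdf_factor θ x, ENNReal.ofReal_mul (Real.exp_nonneg _), mul_comm]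

lemma lintegral_pi_prod : ∀ (n : ℕ) (μ : Measure ℝ) [SigmaFinite μ] (f : Fin n → ℝ → ENNReal),
    (∀ i, Measurable (f i)) →
    ∫⁻ y, ∏ i, f i (y i) ∂(Measure.pi fun _ : Fin n => μ) = ∏ i, ∫⁻ x, f i x ∂μ := by
  intro n
  induction n with
  | zero =>
      intro μ _ f hf
      simp
  | succ n ih =>
      intro μ _ f hf
      have key := (measurePreserving_piFinSuccAbove (fun _ : Fin (n + 1) => μ) 0).symm
      have hF : Measurable fun y : Fin (n + 1) → ℝ => ∏ i, f i (y i) :=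
        Finset.measurable_prod _ fun i _ => (hf i).comp (measurable_pi_apply i)
      rw [← key.lintegral_comp hF]
      have heq : ∀ z : ℝ × (Fin n → ℝ),
          (∏ i, f i (((MeasurableEquiv.piFinSuccAbove (fun _ : Fin (n + 1) => ℝ) 0).symm z) i))
            = f 0 z.1 * ∏ j : Fin n, f (Fin.succ j) (z.2 j) := by
        intro z
        rw [MeasurableEquiv.piFinSuccAbove_symm_apply]
        simp only [Fin.insertNthEquiv, Equiv.coe_fn_mk, Fin.insertNth_zero]
        rw [Fin.prod_univ_succ]
        simp [Fin.cons_zero, Fin.cons_succ]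
      simp_rw [heq]
      have hg : Measurable fun b : Fin n → ℝ => ∏ j : Fin n, f (Fin.succ j) (b j) :=
        Finset.measurable_prod _ fun j _ => (hf (Fin.succ j)).comp (measurable_pi_apply j)
      have hkey := lintegral_prod_mul (μ := μ) (ν := Measure.pi fun _ : Fin n => μ)
        (f := f 0) (g := fun b : Fin n → ℝ => ∏ j : Fin n, f (Fin.succ j) (b j))
        (hf 0).aemeasurable hg.aemeasurable
      rw [hkey, ih μ (fun j => f (Fin.succ j)) (fun j => hf _), Fin.prod_univ_succ]

lemma gaussP_withDensity (n : ℕ) (θ : ℝ) :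
    gaussP n θ = (gaussP n 0).withDensity (fun y => ∏ i, gDens θ (y i)) := by
  unfold gaussP
  refine Measure.pi_eq fun s hs => ?_
  rw [withDensity_apply _ (MeasurableSet.univ_pi hs),
    ← lintegral_indicator (MeasurableSet.univ_pi hs)]
  have hind : ∀ y : Fin n → ℝ,
      (Set.pi Set.univ s).indicator (fun y => ∏ i, gDens θ (y i)) y
        = ∏ i, (s i).indicator (gDens θ) (y i) := by
    intro y
    by_cases hy : y ∈ Set.pi Set.univ s
    · rw [Set.indicator_of_mem hy]
      exact Finset.prod_congr rfl fun i _ =>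
        (Set.indicator_of_mem (hy i (Set.mem_univ i)) _).symm
    · rw [Set.indicator_of_notMem hy]
      rw [Set.mem_pi] at hy
      push_neg at hy
      obtain ⟨i, -, hi⟩ := hy
      exact (Finset.prod_eq_zero (Finset.mem_univ i) (Set.indicator_of_notMem hi _)).symm
  simp_rw [hind]
  rw [lintegral_pi_prod n (gaussianReal 0 1) _
    (fun i => (gDens_meas θ).indicator (hs i))]
  refine Finset.prod_congr rfl fun i _ => ?_
  rw [lintegral_indicator (hs i), ← withDensity_apply _ (hs i), ← gauss_withDensity]

lemma lintegral_gDens_sq (θ : ℝ) :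
    ∫⁻ x, gDens θ x ^ 2 ∂(gaussianReal 0 1) = ENNReal.ofReal (Real.exp (θ ^ 2)) := by
  have hpt : ∀ x, gDens θ x ^ 2
      = ENNReal.ofReal (Real.exp (θ ^ 2)) * gDens (2 * θ) x := by
    intro x
    unfold gDens
    rw [← ENNReal.ofReal_pow (Real.exp_nonneg _), ← ENNReal.ofReal_mul (Real.exp_nonneg _)]
    congr 1
    rw [← Real.exp_nat_mul, ← Real.exp_add]
    congr 1
    push_cast
    ring
  simp_rw [hpt]
  rw [lintegral_const_mul _ (gDens_meas (2 * θ))]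
  have : ∫⁻ x, gDens (2 * θ) x ∂(gaussianReal 0 1) = 1 := by
    have h1 : ((gaussianReal 0 1).withDensity (gDens (2 * θ))) Set.univ = 1 := by
      rw [← gauss_withDensity]
      simp
    rwa [withDensity_apply _ MeasurableSet.univ, Measure.restrict_univ] at h1
  rw [this, mul_one]

lemma cs_bound {α : Type*} [MeasurableSpace α] {μ : Measure α} (f : α → ENNReal)
    (hf : Measurable f) {B : Set α} (hB : MeasurableSet B) :
    ∫⁻ x in B, f x ∂μ ≤ (∫⁻ x, f x ^ 2 ∂μ) ^ (1 / 2 : ℝ) * (μ B) ^ (1 / 2 : ℝ) := by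
  have hpq : Real.HolderConjugate 2 2 := ⟨by norm_num, by norm_num, by norm_num⟩
  have hcs := ENNReal.lintegral_mul_le_Lp_mul_Lq μ hpq hf.aemeasurable
    ((measurable_one.indicator hB : Measurable (B.indicator (1 : α → ENNReal)))).aemeasurable
  have h1 : ∫⁻ a, (f * B.indicator (1 : α → ENNReal)) a ∂μ = ∫⁻ x in B, f x ∂μ := by
    rw [← lintegral_indicator hB]
    refine lintegral_congr fun x => ?_
    by_cases hx : x ∈ B
    · simp [Set.indicator_of_mem hx]
    · simp [Set.indicator_of_notMem hx]
  have h2 : ∫⁻ a, (B.indicator (1 : α → ENNReal)) a ^ (2 : ℝ) ∂μ = μ B := by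
    rw [← lintegral_indicator_one hB]
    refine lintegral_congr fun x => ?_
    by_cases hx : x ∈ B
    · simp [Set.indicator_of_mem hx]
    · simp [Set.indicator_of_notMem hx, ENNReal.zero_rpow_of_pos]
  have h3 : ∀ a, f a ^ (2 : ℝ) = f a ^ 2 := fun a => by
    rw [← ENNReal.rpow_natCast (f a) 2]; norm_num
  rw [h1, h2] at hcs
  simp_rw [h3] at hcs
  exact hcs

theorem stmt_16
    (est : (n : ℕ) → (Fin n → ℝ) → ℝ)
    (hmeas : ∀ n, Measurable (est n))
    (hsparse : Tendsto (fun n => gaussP n 0 {y | est n y = 0}) atTop (𝓝 1))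
    (l : ℝ → ℝ) (hl : ∀ s, 0 ≤ l s) (hl0 : ∀ s, l 0 ≤ l s) (hlmeas : Measurable l)
    (ρ : ℕ → ℝ) (hρpos : ∀ n, 0 < ρ n)
    (hρ : Tendsto (fun n : ℕ => Real.sqrt n * ρ n) atTop atTop)
    (θstar : ℝ) (hθstar : θstar = 0) :
    Tendsto (fun n : ℕ => ⨆ θ : ℝ, ⨆ _ : |θ - θstar| < ρ n,
        ∫⁻ y, ENNReal.ofReal (l (Real.sqrt n * (est n y - θ))) ∂(gaussP n θ))
      atTop (𝓝 (⨆ s : ℝ, ENNReal.ofReal (l s))) := by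
  subst hθstar
  set L := ⨆ s : ℝ, ENNReal.ofReal (l s) with hL
  have hle : ∀ n : ℕ, (⨆ θ : ℝ, ⨆ _ : |θ - (0:ℝ)| < ρ n,
      ∫⁻ y, ENNReal.ofReal (l (Real.sqrt n * (est n y - θ))) ∂(gaussP n θ)) ≤ L := by
    intro n
    refine iSup₂_le fun θ _ => ?_
    calc ∫⁻ y, ENNReal.ofReal (l (Real.sqrt n * (est n y - θ))) ∂(gaussP n θ)
        ≤ ∫⁻ _, L ∂(gaussP n θ) :=
          lintegral_mono fun y => le_iSup (fun s => ENNReal.ofReal (l s)) _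
      _ = L := by simp
  rw [tendsto_order]
  constructor
  · intro a ha
    obtain ⟨s, hs⟩ := lt_iSup_iff.mp ha
    set k := ENNReal.ofReal (l s) with hk
    have hkne : k ≠ ⊤ := ENNReal.ofReal_ne_top
    have hane : a ≠ ⊤ := hs.ne_top
    -- the events and the local alternatives
    set B : (n : ℕ) → Set (Fin n → ℝ) := fun n => {y | est n y = 0} with hB
    have hBmeas : ∀ n, MeasurableSet (B n) := fun n => (hmeas n) (measurableSet_singleton 0)
    set θn : ℕ → ℝ := fun n => -(s / Real.sqrt n) with hθn
    -- the complement probability under the null goes to 0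
    have hcompl : Tendsto (fun n => gaussP n 0 (B n)ᶜ) atTop (𝓝 0) := by
      have := ENNReal.Tendsto.sub (tendsto_const_nhds (x := (1 : ENNReal))) hsparse
        (Or.inl ENNReal.one_ne_top)
      simp only [tsub_self] at this
      refine this.congr fun n => ?_
      rw [prob_compl_eq_one_sub (hBmeas n)]
    -- Cauchy-Schwarz bound on the complement under the alternative
    have hbound : ∀ n : ℕ, 1 ≤ n →
        gaussP n (θn n) (B n)ᶜ ≤ (ENNReal.ofReal (Real.exp (s ^ 2))) ^ (1 / 2 : ℝ)
          * (gaussP n 0 (B n)ᶜ) ^ (1 / 2 : ℝ) := by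
      intro n hn
      have hsqrt : (Real.sqrt n) ^ 2 = (n : ℝ) := Real.sq_sqrt (Nat.cast_nonneg n)
      have hnne : (n : ℝ) ≠ 0 := Nat.cast_ne_zero.mpr (Nat.one_le_iff_ne_zero.mp hn)
      have hGmeas : Measurable fun y : Fin n → ℝ => ∏ i, gDens (θn n) (y i) :=
        Finset.measurable_prod _ fun i _ => (gDens_meas _).comp (measurable_pi_apply i)
      rw [gaussP_withDensity n (θn n), withDensity_apply _ (hBmeas n).compl]
      refine (cs_bound _ hGmeas (hBmeas n).compl).trans ?_
      have hsq : ∫⁻ y, (∏ i, gDens (θn n) (y i)) ^ 2 ∂(gaussP n 0)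
          = ENNReal.ofReal (Real.exp (s ^ 2)) := by
        have hpt : ∀ y : Fin n → ℝ, (∏ i, gDens (θn n) (y i)) ^ 2
            = ∏ i, (fun x => gDens (θn n) x ^ 2) (y i) := fun y => by
          rw [← Finset.prod_pow]
        simp_rw [hpt]
        unfold gaussP
        rw [lintegral_pi_prod n (gaussianReal 0 1) _
          (fun i => (gDens_meas _).pow_const 2)]
        rw [Finset.prod_const, lintegral_gDens_sq, Finset.card_univ, Fintype.card_fin,
          ← ENNReal.ofReal_pow (Real.exp_nonneg _), ← Real.exp_nat_mul]
        congr 2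
        rw [hθn]
        simp only [neg_sq, div_pow, hsqrt]
        field_simp
      rw [hsq]
    -- hence the probability bound under the alternative tends to 0
    have htend0 : Tendsto (fun n => (ENNReal.ofReal (Real.exp (s ^ 2))) ^ (1 / 2 : ℝ)
        * (gaussP n 0 (B n)ᶜ) ^ (1 / 2 : ℝ)) atTop (𝓝 0) := by
      have hc : Tendsto (fun n => (gaussP n 0 (B n)ᶜ) ^ (1 / 2 : ℝ)) atTop
          (𝓝 ((0 : ENNReal) ^ (1 / 2 : ℝ))) :=
        (ENNReal.continuous_rpow_const.tendsto 0).comp hcompl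
      rw [ENNReal.zero_rpow_of_pos (by norm_num)] at hc
      have := ENNReal.Tendsto.const_mul (a := (ENNReal.ofReal (Real.exp (s ^ 2))) ^ (1 / 2 : ℝ))
        hc (Or.inr (ENNReal.rpow_ne_top_of_nonneg (by norm_num) ENNReal.ofReal_ne_top))
      simpa using this
    have htendc : Tendsto (fun n => gaussP n (θn n) (B n)ᶜ) atTop (𝓝 0) := by
      refine tendsto_of_tendsto_of_tendsto_of_le_of_le' tendsto_const_nhds htend0
        (Eventually.of_forall fun n => zero_le) ?_
      filter_upwards [eventually_ge_atTop 1] with n hn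
      exact hbound n hn
    -- multiply by k
    have hkmul : Tendsto (fun n => k * gaussP n (θn n) (B n)ᶜ) atTop (𝓝 0) := by
      have := ENNReal.Tendsto.const_mul (a := k) htendc (Or.inr hkne)
      simpa using this
    have hev1 : ∀ᶠ n in atTop, k * gaussP n (θn n) (B n)ᶜ < k - a :=
      hkmul.eventually_lt_const (tsub_pos_of_lt hs)
    have hev2 : ∀ᶠ n : ℕ in atTop, |s| < Real.sqrt ↑n * ρ n := hρ.eventually_gt_atTop |s|
    filter_upwards [hev1, hev2, eventually_ge_atTop 1] with n h1 h2 hn1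
    have hsqrtpos : 0 < Real.sqrt n := Real.sqrt_pos.mpr (by exact_mod_cast hn1)
    -- the alternative lies in the neighborhood
    have hθmem : |θn n - 0| < ρ n := by
      rw [sub_zero, hθn, abs_neg, abs_div, abs_of_pos hsqrtpos, div_lt_iff₀ hsqrtpos]
      linarith [h2]
    -- lower bound the integral at θn n
    have hterm : k * gaussP n (θn n) (B n)
        ≤ ∫⁻ y, ENNReal.ofReal (l (Real.sqrt n * (est n y - θn n))) ∂(gaussP n (θn n)) := by
      have hset : ∫⁻ y in B n, ENNReal.ofReal (l (Real.sqrt n * (est n y - θn n)))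
          ∂(gaussP n (θn n)) = k * gaussP n (θn n) (B n) := by
        rw [setLIntegral_congr_fun (hBmeas n)
          (fun y (hy : est n y = 0) => ?_), setLIntegral_const]
        rw [hy, hθn]
        congr 2
        rw [zero_sub, neg_neg, mul_div_cancel₀ _ (ne_of_gt hsqrtpos)]
      rw [← hset]
      exact setLIntegral_le_lintegral _ _
    -- conclude: a < k * P(B)
    have hmain : a < k * gaussP n (θn n) (B n) := by
      by_contra hcon
      push_neg at hcon
      have hsum : k * gaussP n (θn n) (B n) + k * gaussP n (θn n) (B n)ᶜ = k := by
        rw [← mul_add, measure_add_measure_compl (hBmeas n), measure_univ, mul_one]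
      have : k < k := by
        calc k = k * gaussP n (θn n) (B n) + k * gaussP n (θn n) (B n)ᶜ := hsum.symm
          _ < a + (k - a) := ENNReal.add_lt_add_of_le_of_lt
              (ENNReal.mul_ne_top hkne (measure_ne_top _ _)) hcon h1
          _ = k := add_tsub_cancel_of_le hs.le
      exact absurd this (lt_irrefl k)
    calc a < k * gaussP n (θn n) (B n) := hmain
      _ ≤ ∫⁻ y, ENNReal.ofReal (l (Real.sqrt n * (est n y - θn n))) ∂(gaussP n (θn n)) := hterm
      _ ≤ ⨆ θ : ℝ, ⨆ _ : |θ - (0:ℝ)| < ρ n,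
            ∫⁻ y, ENNReal.ofReal (l (Real.sqrt n * (est n y - θ))) ∂(gaussP n θ) :=
        le_iSup₂ (f := fun (θ : ℝ) (_ : |θ - (0:ℝ)| < ρ n) =>
          ∫⁻ y, ENNReal.ofReal (l (Real.sqrt ↑n * (est n y - θ))) ∂(gaussP n θ)) (θn n) hθmem
  · intro b hb
    exact Eventually.of_forall fun n => lt_of_le_of_lt (hle n) hb
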